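/- Fix K̄ > 0 and let f(b) := ψ(b)/ψ'(b) − φ_{K̄}(b)/φ_{K̄}'(b). For each integer n ≥ 1 let b̂(n) be the unique positive solution of f(b) = K̄/(n·r) if φ_{K̄}'(0) < −n·r/K̄ and b̂(n) := 0 otherwise, and define V_n(x) := D₁(n)·ψ(x) for 0 ≤ x ≤ b̂(n) and V_n(x) := D₄(n)·φ_{K̄}(x) + K̄/(n·r) for x ≥ b̂(n), where D₁(n) := (−(K̄/(n·r))·φ_{K̄}'(b̂(n))) / (φ_{K̄}(b̂(n))ψ'(b̂(n)) − φ_{K̄}'(b̂(n))ψ(b̂(n))) and D₄(n) := (−(K̄/(n·r))·ψ'(b̂(n))) / (φ_{K̄}(b̂(n))ψ'(b̂(n)) − φ_{K̄}'(b̂(n))ψ(b̂(n))). Then the total equilibrium value is nonincreasing in n: for all integers 1 ≤ m ≤ n and all x ≥ 0, m·V_m(x) ≥ n·V_n(x). -/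

import Mathlib

open Set Filter Topology

/-- derivative of a function monotone on `Ici 0` is nonneg at interior points -/
lemma aux_deriv_nonneg_of_monotoneOn {g : ℝ → ℝ} (hg : MonotoneOn g (Ici (0:ℝ)))
    {x : ℝ} (hx : 0 < x) (hd : DifferentiableAt ℝ g x) : 0 ≤ deriv g x := by
  have h := hasDerivAt_iff_tendsto_slope.mp hd.hasDerivAt
  refine ge_of_tendsto h ?_
  filter_upwards [eventually_nhdsWithin_of_eventually_nhds (eventually_gt_nhds hx),
    self_mem_nhdsWithin] with y hy hne
  rcases lt_or_gt_of_ne (hne : y ≠ x) with h1 | h1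
  · rw [slope_def_field]
    have : g y ≤ g x := hg (le_of_lt hy) (le_of_lt hx) h1.le
    exact div_nonneg_of_nonpos (by linarith) (by linarith)
  · rw [slope_def_field]
    have : g x ≤ g y := hg (le_of_lt hx) (le_of_lt hy) h1.le
    exact div_nonneg (by linarith) (by linarith)

/-- if derivative positive, there is a point on the left with smaller value, within `(0,x)` -/
lemma aux_exists_left_lt {g : ℝ → ℝ} {x d : ℝ} (hx : 0 < x) (h : HasDerivAt g d x)
    (hd : 0 < d) : ∃ y, 0 < y ∧ y < x ∧ g y < g x := by
  have h1 : ∀ᶠ y in 𝓝[≠] x, 0 < slope g x y :=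
    (hasDerivAt_iff_tendsto_slope.mp h).eventually (eventually_gt_nhds hd)
  have h2 : ∀ᶠ y in 𝓝[<] x, 0 < slope g x y :=
    h1.filter_mono (nhdsWithin_mono x fun y hy => ne_of_lt hy)
  have h3 : ∀ᶠ y in 𝓝[<] x, 0 < y :=
    eventually_nhdsWithin_of_eventually_nhds (eventually_gt_nhds hx)
  obtain ⟨y, hs, hy0, hyx⟩ := (h2.and (h3.and self_mem_nhdsWithin)).exists
  refine ⟨y, hy0, hyx, ?_⟩
  rw [slope_def_field] at hs
  rcases div_pos_iff.mp hs with ⟨h4, h5⟩ | ⟨h4, h5⟩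
  · exact absurd h5 (by simp only [sub_pos]; exact not_lt.mpr (le_of_lt hyx))
  · linarith

/-- if derivative positive, there is a point on the right with bigger value -/
lemma aux_exists_right_gt {g : ℝ → ℝ} {x d : ℝ} (h : HasDerivAt g d x)
    (hd : 0 < d) : ∃ y, x < y ∧ g x < g y := by
  have h1 : ∀ᶠ y in 𝓝[≠] x, 0 < slope g x y :=
    (hasDerivAt_iff_tendsto_slope.mp h).eventually (eventually_gt_nhds hd)
  have h2 : ∀ᶠ y in 𝓝[>] x, 0 < slope g x y :=
    h1.filter_mono (nhdsWithin_mono x fun y hy => ne_of_gt hy)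
  obtain ⟨y, hs, hyx⟩ := (h2.and self_mem_nhdsWithin).exists
  refine ⟨y, hyx, ?_⟩
  rw [slope_def_field] at hs
  rcases div_pos_iff.mp hs with ⟨h4, h5⟩ | ⟨h4, h5⟩
  · linarith
  · simp only [sub_neg] at h5; exact absurd h5 (not_lt.mpr (le_of_lt hyx))

lemma aux_alg_hi (jj k kap s Wb Fx : ℝ) (hW : Wb ≠ 0) (hjk : jj * k = kap) :
    jj * (-(k) * s / Wb * Fx + k) = kap * (1 - Fx * s / Wb) := by
  field_simp
  linear_combination (Wb - Fx * s) * hjk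

set_option maxHeartbeats 2000000 in
theorem stmt_4
    (r c : ℝ) (hr : 0 < r) (hc : 0 < c)
    (μ σ : ℝ → ℝ) (hμ : ContDiff ℝ 1 μ) (hσ : ContDiff ℝ 1 σ)
    (hσpos : ∀ x ≥ (0:ℝ), 0 < σ x ^ 2)
    (hμderiv : ∀ x ≥ (0:ℝ), deriv μ x < r)
    (hμ0 : 0 < μ 0)
    (hμc : ∀ x ≥ c, μ x ≤ r * x - 1 / c)
    (ψ : ℝ → ℝ) (hψC : ContDiff ℝ 3 ψ)
    (hψ0 : ψ 0 = 0) (hψd0 : deriv ψ 0 = 1)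
    (hψpos : ∀ x > (0:ℝ), 0 < ψ x)
    (hψmono : MonotoneOn ψ (Ici (0:ℝ)))
    (hψODE : ∀ x ≥ (0:ℝ),
      (1/2) * σ x ^ 2 * deriv (deriv ψ) x + μ x * deriv ψ x - r * ψ x = 0)
    (φ : ℝ → ℝ → ℝ)
    (hφC : ∀ A ≥ (0:ℝ), ContDiff ℝ 2 (φ A))
    (hφ0 : ∀ A ≥ (0:ℝ), φ A 0 = 1)
    (hφpos : ∀ A ≥ (0:ℝ), ∀ x ≥ (0:ℝ), 0 < φ A x)
    (hφanti : ∀ A ≥ (0:ℝ), AntitoneOn (φ A) (Ici (0:ℝ)))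
    (hφlim : ∀ A ≥ (0:ℝ), Tendsto (φ A) atTop (nhds 0))
    (hφODE : ∀ A ≥ (0:ℝ), ∀ x ≥ (0:ℝ),
      (1/2) * σ x ^ 2 * deriv (deriv (φ A)) x + (μ x - A) * deriv (φ A) x - r * φ A x = 0)
    (Kbar : ℝ) (hKbar : 0 < Kbar)
    (f : ℝ → ℝ)
    (hf : ∀ b, f b = ψ b / deriv ψ b - φ Kbar b / deriv (φ Kbar) b)
    (bhat : ℕ → ℝ)
    (hbhatnn : ∀ n : ℕ, 1 ≤ n → 0 ≤ bhat n)
    (hbhat : ∀ n : ℕ, 1 ≤ n →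
      (deriv (φ Kbar) 0 < -((n : ℝ) * r / Kbar) →
        0 < bhat n ∧ f (bhat n) = Kbar / ((n : ℝ) * r) ∧
        (∀ b' : ℝ, 0 < b' → f b' = Kbar / ((n : ℝ) * r) → b' = bhat n)) ∧
      (¬ deriv (φ Kbar) 0 < -((n : ℝ) * r / Kbar) → bhat n = 0))
    (V : ℕ → ℝ → ℝ)
    (hVlo : ∀ n : ℕ, 1 ≤ n → ∀ x, 0 ≤ x → x ≤ bhat n →
      V n x = ((-(Kbar / ((n : ℝ) * r)) * deriv (φ Kbar) (bhat n)) /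
        (φ Kbar (bhat n) * deriv ψ (bhat n)
          - deriv (φ Kbar) (bhat n) * ψ (bhat n))) * ψ x)
    (hVhi : ∀ n : ℕ, 1 ≤ n → ∀ x, bhat n ≤ x →
      V n x = ((-(Kbar / ((n : ℝ) * r)) * deriv ψ (bhat n)) /
        (φ Kbar (bhat n) * deriv ψ (bhat n)
          - deriv (φ Kbar) (bhat n) * ψ (bhat n))) * φ Kbar x + Kbar / ((n : ℝ) * r)) :
    ∀ m n : ℕ, 1 ≤ m → m ≤ n → ∀ x ≥ (0:ℝ), (n : ℝ) * V n x ≤ (m : ℝ) * V m x := by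
  -- abbreviations
  set Φ : ℝ → ℝ := φ Kbar with hΦdef
  have hK0 : (0:ℝ) ≤ Kbar := hKbar.le
  -- regularity
  have hψdiff : Differentiable ℝ ψ := hψC.differentiable (by norm_num)
  have hψ'C : ContDiff ℝ 2 (deriv ψ) := by
    have h3 : ContDiff ℝ ((2:WithTop ℕ∞) + 1) ψ := by
      convert hψC using 2 <;> norm_num
    exact (contDiff_succ_iff_deriv.mp h3).2.2
  have hψ'diff : Differentiable ℝ (deriv ψ) := hψ'C.differentiable (by norm_num)
  have hψ'cont : Continuous (deriv ψ) := hψ'diff.continuous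
  have hψcont : Continuous ψ := hψdiff.continuous
  have hΦC : ContDiff ℝ 2 Φ := hφC Kbar hK0
  have hΦdiff : Differentiable ℝ Φ := hΦC.differentiable (by norm_num)
  have hΦ'C : ContDiff ℝ 1 (deriv Φ) := by
    have h2 : ContDiff ℝ ((1:WithTop ℕ∞) + 1) Φ := by
      convert hΦC using 2 <;> norm_num
    exact (contDiff_succ_iff_deriv.mp h2).2.2
  have hΦ'diff : Differentiable ℝ (deriv Φ) := hΦ'C.differentiable (by norm_num)
  have hΦ'cont : Continuous (deriv Φ) := hΦ'diff.continuous
  have hΦcont : Continuous Φ := hΦdiff.continuous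
  -- sign facts
  have hψnonneg : ∀ y, 0 ≤ y → 0 ≤ ψ y := by
    intro y hy
    rcases eq_or_lt_of_le hy with h | h
    · rw [← h, hψ0]
    · exact (hψpos y h).le
  have hΦpos : ∀ y, 0 ≤ y → 0 < Φ y := fun y hy => hφpos Kbar hK0 y hy
  have hψ'nn : ∀ z, 0 < z → 0 ≤ deriv ψ z := fun z hz =>
    aux_deriv_nonneg_of_monotoneOn hψmono hz (hψdiff z)
  have hψ'pos : ∀ y, 0 ≤ y → 0 < deriv ψ y := by
    intro y hy
    rcases eq_or_lt_of_le hy with h | h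
    · rw [← h, hψd0]; norm_num
    · by_contra hcon
      push_neg at hcon
      have h0 : deriv ψ y = 0 := le_antisymm hcon (hψ'nn y h)
      have hODE := hψODE y hy
      rw [h0] at hODE
      have hσ2 := hσpos y hy
      have hψy := hψpos y h
      have hψ'' : 0 < deriv (deriv ψ) y := by nlinarith
      obtain ⟨z, hz0, hzy, hzlt⟩ := aux_exists_left_lt h ((hψ'diff y).hasDerivAt) hψ''
      rw [h0] at hzlt
      exact absurd (hψ'nn z hz0) (not_le.mpr hzlt)
  have hΦ'np : ∀ z, 0 < z → deriv Φ z ≤ 0 := by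
    intro z hz
    have hmono : MonotoneOn (fun w => -Φ w) (Ici (0:ℝ)) := by
      intro a ha b hb hab
      simp only [neg_le_neg_iff]
      exact hφanti Kbar hK0 ha hb hab
    have h := aux_deriv_nonneg_of_monotoneOn hmono hz ((hΦdiff z).neg)
    rw [deriv.fun_neg] at h
    linarith
  have hΦ'neg : ∀ y, 0 ≤ y → deriv Φ y < 0 := by
    intro y hy
    by_contra hcon
    push_neg at hcon
    rcases eq_or_lt_of_le hcon with heq | hpos
    · have hODE := hφODE Kbar hK0 y hy
      rw [← heq] at hODE
      have hσ2 := hσpos y hy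
      have hΦy := hΦpos y hy
      have hΦ'' : 0 < deriv (deriv Φ) y := by nlinarith
      obtain ⟨z, hzy, hzgt⟩ := aux_exists_right_gt ((hΦ'diff y).hasDerivAt) hΦ''
      have h1 := hΦ'np z (lt_of_le_of_lt hy hzy)
      rw [← heq] at hzgt
      linarith
    · obtain ⟨z, hzy, hzgt⟩ := aux_exists_right_gt ((hΦdiff y).hasDerivAt) hpos
      have h1 := hφanti Kbar hK0 (show y ∈ Ici (0:ℝ) from hy)
        (show z ∈ Ici (0:ℝ) from le_trans hy hzy.le) hzy.le
      linarith
  -- Wronskian-type quantity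
  set W : ℝ → ℝ := fun y => Φ y * deriv ψ y - deriv Φ y * ψ y with hWdef
  have hWpos : ∀ y, 0 ≤ y → 0 < W y := by
    intro y hy
    have h1 : 0 < Φ y * deriv ψ y := mul_pos (hΦpos y hy) (hψ'pos y hy)
    have h2 : deriv Φ y * ψ y ≤ 0 :=
      mul_nonpos_of_nonpos_of_nonneg (hΦ'neg y hy).le (hψnonneg y hy)
    simp only [hWdef]; linarith
  set P : ℝ → ℝ := fun y => W y / (-(deriv Φ y)) with hPdef
  set Q : ℝ → ℝ := fun y => W y / deriv ψ y with hQdef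
  have hPpos : ∀ y, 0 ≤ y → 0 < P y := fun y hy =>
    div_pos (hWpos y hy) (neg_pos.mpr (hΦ'neg y hy))
  have hQpos : ∀ y, 0 ≤ y → 0 < Q y := fun y hy =>
    div_pos (hWpos y hy) (hψ'pos y hy)
  have hΦ0 : Φ 0 = 1 := by rw [hΦdef]; exact hφ0 Kbar hK0
  have hQ0 : Q 0 = 1 := by
    simp only [hQdef, hWdef, hψd0, hψ0, hΦ0]
    ring
  have hPQid : ∀ y, 0 ≤ y → ψ y / P y + Φ y / Q y = 1 := by
    intro y hy
    have hWne : W y ≠ 0 := (hWpos y hy).ne'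
    have hsne : deriv ψ y ≠ 0 := (hψ'pos y hy).ne'
    have htne : deriv Φ y ≠ 0 := (hΦ'neg y hy).ne
    simp only [hPdef, hQdef, hWdef] at hWne ⊢
    rw [div_div_eq_mul_div, div_div_eq_mul_div, ← add_div, div_eq_one_iff_eq hWne]
    ring
  -- key pointwise inequality : ψ'·Φ'' − ψ''·Φ' ≤ 0 whenever f ≤ Kbar / r
  have hkey : ∀ y, 0 ≤ y → f y ≤ Kbar / r →
      deriv ψ y * deriv (deriv Φ) y - deriv (deriv ψ) y * deriv Φ y ≤ 0 := by
    intro y hy hfy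
    have hσ2 := hσpos y hy
    have hODEψ := hψODE y hy
    have hODEφ := hφODE Kbar hK0 y hy
    have hs := hψ'pos y hy
    have ht := hΦ'neg y hy
    have hp := hΦpos y hy
    have ha := hψnonneg y hy
    rw [hf y] at hfy
    have hst : deriv ψ y * deriv Φ y < 0 := mul_neg_of_pos_of_neg hs ht
    rw [div_sub_div _ _ hs.ne' ht.ne, div_le_iff_of_neg hst] at hfy
    have h2 : Kbar * (deriv ψ y * deriv Φ y) ≤
        r * (ψ y * deriv Φ y - deriv ψ y * Φ y) := by
      have h3 := mul_le_mul_of_nonneg_left hfy hr.le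
      have h4 : r * (Kbar / r * (deriv ψ y * deriv Φ y)) =
          Kbar * (deriv ψ y * deriv Φ y) := by field_simp
      linarith
    have hmul : (1/2) * σ y ^ 2 *
        (deriv ψ y * deriv (deriv Φ) y - deriv (deriv ψ) y * deriv Φ y) =
        r * (Φ y * deriv ψ y - ψ y * deriv Φ y) + Kbar * (deriv ψ y * deriv Φ y) := by
      linear_combination deriv ψ y * hODEφ - deriv Φ y * hODEψ
    have hle : (1/2) * σ y ^ 2 *
        (deriv ψ y * deriv (deriv Φ) y - deriv (deriv ψ) y * deriv Φ y) ≤ 0 := by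
      rw [hmul]; linarith
    nlinarith
  -- f is continuous on [0,∞)
  have hfcont : ContinuousOn f (Ici (0:ℝ)) := by
    refine ContinuousOn.congr ?_ (fun b _ => hf b)
    exact (hψcont.continuousOn.div hψ'cont.continuousOn
        (fun y hy => (hψ'pos y hy).ne')).sub
      (hΦcont.continuousOn.div hΦ'cont.continuousOn (fun y hy => (hΦ'neg y hy).ne))
  have hf0 : f 0 = (-(deriv Φ 0))⁻¹ := by
    have htne : deriv Φ 0 ≠ 0 := (hΦ'neg 0 le_rfl).ne
    rw [hf 0, hψ0, hψd0, hΦ0]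
    rw [inv_neg, one_div]
    ring
  -- bound f ≤ k_j on [0, bhat j] when bhat j > 0
  have hfle : ∀ j : ℕ, 1 ≤ j → 0 < bhat j → ∀ y ∈ Icc (0:ℝ) (bhat j),
      f y ≤ Kbar / ((j:ℝ) * r) := by
    intro j hj hbj y hy
    obtain ⟨hy0, hyB⟩ := hy
    have hC : deriv Φ 0 < -((j:ℝ) * r / Kbar) := by
      by_contra hnC
      exact hbj.ne' ((hbhat j hj).2 hnC)
    obtain ⟨hBpos, hfB, huniq⟩ := (hbhat j hj).1 hC
    have hjpos : (0:ℝ) < (j:ℝ) := by exact_mod_cast hj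
    have hjr : 0 < (j:ℝ) * r := mul_pos hjpos hr
    have hf0lt : f 0 < Kbar / ((j:ℝ) * r) := by
      rw [hf0]
      have h1 : (j:ℝ) * r / Kbar < -(deriv Φ 0) := by linarith
      have h2 : 0 < (j:ℝ) * r / Kbar := div_pos hjr hKbar
      calc (-(deriv Φ 0))⁻¹ < ((j:ℝ) * r / Kbar)⁻¹ := by
            exact inv_strictAnti₀ h2 h1
        _ = Kbar / ((j:ℝ) * r) := by rw [inv_div]
    rcases eq_or_lt_of_le hyB with heq | hylt
    · rw [heq, hfB]
    · by_contra hcon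
      push_neg at hcon
      have hsub : Icc (0:ℝ) y ⊆ Ici (0:ℝ) := fun z hz => hz.1
      obtain ⟨z, hz, hfz⟩ := intermediate_value_Icc hy0 (hfcont.mono hsub)
        (show Kbar / ((j:ℝ) * r) ∈ Icc (f 0) (f y) from ⟨hf0lt.le, hcon.le⟩)
      have hz0 : 0 < z := by
        rcases eq_or_lt_of_le hz.1 with h0 | h0
        · rw [← h0] at hfz; linarith
        · exact h0
      have := huniq z hz0 hfz
      linarith [hz.2]
  -- monotonicity of P and Q on [0, bhat j]
  -- HasDerivAt statements for W, P, Q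
  have hWder : ∀ y : ℝ, HasDerivAt W
      (deriv Φ y * deriv ψ y + Φ y * deriv (deriv ψ) y
        - (deriv (deriv Φ) y * ψ y + deriv Φ y * deriv ψ y)) y := by
    intro y
    exact ((hΦdiff y).hasDerivAt.mul (hψ'diff y).hasDerivAt).sub
      ((hΦ'diff y).hasDerivAt.mul (hψdiff y).hasDerivAt)
  have hPder : ∀ y, 0 ≤ y → HasDerivAt P
      (((deriv Φ y * deriv ψ y + Φ y * deriv (deriv ψ) y
        - (deriv (deriv Φ) y * ψ y + deriv Φ y * deriv ψ y)) * (-(deriv Φ y))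
        - W y * (-(deriv (deriv Φ) y))) / (-(deriv Φ y)) ^ 2) y := by
    intro y hy
    exact (hWder y).div ((hΦ'diff y).hasDerivAt.neg) (neg_ne_zero.mpr (hΦ'neg y hy).ne)
  have hQder : ∀ y, 0 ≤ y → HasDerivAt Q
      (((deriv Φ y * deriv ψ y + Φ y * deriv (deriv ψ) y
        - (deriv (deriv Φ) y * ψ y + deriv Φ y * deriv ψ y)) * deriv ψ y
        - W y * deriv (deriv ψ) y) / (deriv ψ y) ^ 2) y := by
    intro y hy
    exact (hWder y).div (hψ'diff y).hasDerivAt (hψ'pos y hy).ne'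
  have hPQmono : ∀ j : ℕ, 1 ≤ j →
      AntitoneOn P (Icc 0 (bhat j)) ∧ MonotoneOn Q (Icc 0 (bhat j)) := by
    intro j hj
    rcases eq_or_lt_of_le (hbhatnn j hj) with h0 | hpos
    · rw [← h0]
      simp only [Icc_self]
      constructor <;>
        · intro a ha b hb _
          rw [mem_singleton_iff] at ha hb
          rw [ha, hb]
    · have hflej := hfle j hj hpos
      have hjpos : (0:ℝ) < (j:ℝ) := by
        exact_mod_cast Nat.lt_of_lt_of_le Nat.zero_lt_one hj
      have hkjle : Kbar / ((j:ℝ) * r) ≤ Kbar / r := by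
        have hj1 : (1:ℝ) ≤ (j:ℝ) := by exact_mod_cast hj
        rw [div_le_div_iff₀ (mul_pos hjpos hr) hr]
        nlinarith [mul_pos hKbar hr, mul_nonneg (mul_pos hKbar hr).le (sub_nonneg.mpr hj1)]
      have hfK : ∀ y ∈ Icc (0:ℝ) (bhat j), f y ≤ Kbar / r := fun y hy =>
        le_trans (hflej y hy) hkjle
      constructor
      · refine antitoneOn_of_deriv_nonpos (convex_Icc 0 (bhat j)) ?_ ?_ ?_
        · intro y hy
          exact (hPder y hy.1).continuousAt.continuousWithinAt
        · intro y hy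
          rw [interior_Icc] at hy
          exact ((hPder y hy.1.le).differentiableAt).differentiableWithinAt
        · intro y hy
          rw [interior_Icc] at hy
          have hy0 : 0 ≤ y := hy.1.le
          rw [(hPder y hy0).deriv]
          have hk := hkey y hy0 (hfK y ⟨hy0, hy.2.le⟩)
          have hnum : (deriv Φ y * deriv ψ y + Φ y * deriv (deriv ψ) y
              - (deriv (deriv Φ) y * ψ y + deriv Φ y * deriv ψ y)) * (-(deriv Φ y))
              - W y * (-(deriv (deriv Φ) y)) =
              Φ y * (deriv ψ y * deriv (deriv Φ) y - deriv (deriv ψ) y * deriv Φ y) := by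
            simp only [hWdef]; ring
          rw [hnum]
          apply div_nonpos_of_nonpos_of_nonneg
          · exact mul_nonpos_of_nonneg_of_nonpos (hΦpos y hy0).le hk
          · exact sq_nonneg _
      · refine monotoneOn_of_deriv_nonneg (convex_Icc 0 (bhat j)) ?_ ?_ ?_
        · intro y hy
          exact (hQder y hy.1).continuousAt.continuousWithinAt
        · intro y hy
          rw [interior_Icc] at hy
          exact ((hQder y hy.1.le).differentiableAt).differentiableWithinAt
        · intro y hy
          rw [interior_Icc] at hy
          have hy0 : 0 ≤ y := hy.1.le
          rw [(hQder y hy0).deriv]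
          have hk := hkey y hy0 (hfK y ⟨hy0, hy.2.le⟩)
          have hnum : (deriv Φ y * deriv ψ y + Φ y * deriv (deriv ψ) y
              - (deriv (deriv Φ) y * ψ y + deriv Φ y * deriv ψ y)) * deriv ψ y
              - W y * deriv (deriv ψ) y =
              (-(ψ y)) * (deriv ψ y * deriv (deriv Φ) y - deriv (deriv ψ) y * deriv Φ y) := by
            simp only [hWdef]; ring
          rw [hnum]
          apply div_nonneg ?_ (sq_nonneg _)
          nlinarith [hψnonneg y hy0]
  -- scaled value formulas
  have hVlo' : ∀ j : ℕ, 1 ≤ j → ∀ x, 0 ≤ x → x ≤ bhat j →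
      (j:ℝ) * V j x = (Kbar / r) * (ψ x / P (bhat j)) := by
    intro j hj x hx0 hxB
    have hB0 : 0 ≤ bhat j := hbhatnn j hj
    have hWne : W (bhat j) ≠ 0 := (hWpos _ hB0).ne'
    have htne : deriv Φ (bhat j) ≠ 0 := (hΦ'neg _ hB0).ne
    have hjne : ((j:ℝ)) ≠ 0 := Nat.cast_ne_zero.mpr (by omega)
    rw [hVlo j hj x hx0 hxB]
    have hWB : Φ (bhat j) * deriv ψ (bhat j) - deriv Φ (bhat j) * ψ (bhat j)
        = W (bhat j) := rfl
    have hPB : P (bhat j) = W (bhat j) / (-(deriv Φ (bhat j))) := rfl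
    rw [hWB, hPB, div_div_eq_mul_div]
    field_simp
  have hVhi' : ∀ j : ℕ, 1 ≤ j → ∀ x, bhat j ≤ x →
      (j:ℝ) * V j x = (Kbar / r) * (1 - Φ x / Q (bhat j)) := by
    intro j hj x hxB
    have hB0 : 0 ≤ bhat j := hbhatnn j hj
    have hWne : W (bhat j) ≠ 0 := (hWpos _ hB0).ne'
    have hsne : deriv ψ (bhat j) ≠ 0 := (hψ'pos _ hB0).ne'
    have hjne : ((j:ℝ)) ≠ 0 := Nat.cast_ne_zero.mpr (by omega)
    rw [hVhi j hj x hxB]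
    have hWB : Φ (bhat j) * deriv ψ (bhat j) - deriv Φ (bhat j) * ψ (bhat j)
        = W (bhat j) := rfl
    have hQB : Q (bhat j) = W (bhat j) / deriv ψ (bhat j) := rfl
    rw [hWB, hQB, div_div_eq_mul_div]
    have hjk : (j:ℝ) * (Kbar / ((j:ℝ) * r)) = Kbar / r := by
      field_simp
    exact aux_alg_hi (j:ℝ) (Kbar / ((j:ℝ) * r)) (Kbar / r) (deriv ψ (bhat j))
      (W (bhat j)) (Φ x) hWne hjk
  -- main argument
  intro m n hm hmn x hx
  rcases eq_or_lt_of_le hmn with rfl | hlt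
  · exact le_rfl
  have hn : 1 ≤ n := le_trans hm hmn
  have hmR : (1:ℝ) ≤ (m:ℝ) := by exact_mod_cast hm
  have hnR : (m:ℝ) < (n:ℝ) := by exact_mod_cast hlt
  have hbn0 : 0 ≤ bhat n := hbhatnn n hn
  have hbm0 : 0 ≤ bhat m := hbhatnn m hm
  -- ordering of thresholds
  have hble : bhat n ≤ bhat m := by
    rcases eq_or_lt_of_le hbn0 with h0 | hpos
    · rw [← h0]; exact hbm0
    · have hCn : deriv Φ 0 < -((n:ℝ) * r / Kbar) := by
        by_contra hnC
        exact hpos.ne' ((hbhat n hn).2 hnC)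
      have hCm : deriv Φ 0 < -((m:ℝ) * r / Kbar) := by
        have h1 : (m:ℝ) * r / Kbar ≤ (n:ℝ) * r / Kbar := by
          rw [div_le_div_iff_of_pos_right hKbar]
          nlinarith
        linarith
      obtain ⟨hBm, hfBm, _⟩ := (hbhat m hm).1 hCm
      by_contra hcon
      push_neg at hcon
      have h1 := hfle n hn hpos (bhat m) ⟨hbm0, hcon.le⟩
      rw [hfBm] at h1
      have hmpos : (0:ℝ) < (m:ℝ) := by linarith
      have hnpos : (0:ℝ) < (n:ℝ) := by linarith
      have h2 : Kbar / ((n:ℝ) * r) < Kbar / ((m:ℝ) * r) := by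
        rw [div_lt_div_iff₀ (mul_pos hnpos hr) (mul_pos hmpos hr)]
        nlinarith [mul_pos hKbar hr]
      linarith
  have hκpos : 0 < Kbar / r := div_pos hKbar hr
  obtain ⟨hPanti, Qmono⟩ := hPQmono m hm
  have hbnmem : bhat n ∈ Icc (0:ℝ) (bhat m) := ⟨hbn0, hble⟩
  have hbmmem : bhat m ∈ Icc (0:ℝ) (bhat m) := ⟨hbm0, le_rfl⟩
  rcases le_total x (bhat n) with hxb | hxb
  · -- inner region
    rw [hVlo' n hn x hx hxb, hVlo' m hm x hx (le_trans hxb hble)]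
    have hPle : P (bhat m) ≤ P (bhat n) := hPanti hbnmem hbmmem hble
    gcongr
    · exact hψnonneg x hx
    · exact hPpos (bhat m) hbm0
  rcases le_total x (bhat m) with hxc | hxc
  · -- middle region
    rw [hVhi' n hn x hxb, hVlo' m hm x hx hxc]
    have hxmem : x ∈ Icc (0:ℝ) (bhat m) := ⟨hx, hxc⟩
    have hPle : P (bhat m) ≤ P x := hPanti hxmem hbmmem hxc
    have hQle : Q (bhat n) ≤ Q x := Qmono hbnmem hxmem hxb
    have h1 : ψ x / P x ≤ ψ x / P (bhat m) := by
      gcongr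
      · exact hψnonneg x hx
      · exact hPpos (bhat m) hbm0
    have h2 : Φ x / Q x ≤ Φ x / Q (bhat n) := by
      gcongr
      · exact (hΦpos x hx).le
      · exact hQpos (bhat n) hbn0
    have hid := hPQid x hx
    have : 1 - Φ x / Q (bhat n) ≤ ψ x / P (bhat m) := by linarith
    gcongr
  · -- outer region
    rw [hVhi' n hn x hxb, hVhi' m hm x hxc]
    have hQle : Q (bhat n) ≤ Q (bhat m) := Qmono hbnmem hbmmem hble
    have h2 : Φ x / Q (bhat m) ≤ Φ x / Q (bhat n) := by
      gcongr
      · exact (hΦpos x hx).le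
      · exact hQpos (bhat n) hbn0
    gcongr
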